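/- For every complex number z with |z| = 1, min( Re(iz), Re((−1/2 − i/2)·z), Re(z) ) ≤ −√(1/10). -/

import Mathlib

open Complex

/-- for every `z` on the unit circle,
`min(Re(iz), Re((−1/2 − i/2)z), Re z) ≤ −√(1/10)`. -/
theorem stmt_18 (z : ℂ) (hz : ‖z‖ = 1) :
    min (min ((Complex.I * z).re) ((((-1 : ℂ) / 2 - Complex.I / 2) * z).re)) z.re ≤
      -Real.sqrt (1 / 10) := by
  by_contra h
  push_neg at h
  rw [lt_min_iff, lt_min_iff] at h
  obtain ⟨⟨h1, h2⟩, h3⟩ := h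
  have hs : Real.sqrt (1 / 10) ^ 2 = 1 / 10 := Real.sq_sqrt (by norm_num)
  have hs0 : (0 : ℝ) ≤ Real.sqrt (1 / 10) := Real.sqrt_nonneg _
  have hn : z.re ^ 2 + z.im ^ 2 = 1 := by
    have h4 : Complex.normSq z = 1 := by rw [← Complex.sq_norm, hz]; norm_num
    rw [Complex.normSq_apply] at h4
    nlinarith [h4]
  have e1 : (Complex.I * z).re = -z.im := by simp
  have e2 : ((((-1 : ℂ) / 2 - Complex.I / 2) * z)).re = -z.re / 2 + z.im / 2 := by
    simp [Complex.mul_re, Complex.sub_re, Complex.sub_im, Complex.div_re, Complex.div_im,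
      Complex.normSq_apply]
    ring
  rw [e1] at h1
  rw [e2] at h2
  set s := Real.sqrt (1 / 10)
  nlinarith [mul_pos (by linarith : (0:ℝ) < z.re + s) (by linarith : (0:ℝ) < s - z.im),
    mul_pos (by linarith : (0:ℝ) < 4 * s - (z.re + s) - (s - z.im))
      (by linarith : (0:ℝ) < (z.re + s) + (s - z.im))]
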